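/- Let k be a field, X a linearly ordered set, and S a subset of the free metabelian Lie algebra L₍₂₎(X). Then every element of the Lie ideal of L₍₂₎(X) generated by S is a k-linear combination of elements of the following two forms: (i) [s, a₁, a₂, ..., aₙ] where s ∈ S, n ≥ 0, aᵢ ∈ X and a₁ ≤ a₂ ≤ ⋯ ≤ aₙ (left-normed product of s with a nondecreasing sequence of generators); (ii) ⁅u, s⁆ where s ∈ S and u is the image in L₍₂₎(X) of a regular R-word. -/

import Mathlib

/-- The free metabelian Lie algebra on `X` over `k`. -/
abbrev FreeMetabelianLieAlgebra (k : Type u) [Field k] (X : Type v) :=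
  FreeLieAlgebra k X ⧸ LieAlgebra.derivedSeries k (FreeLieAlgebra k X) 2

/-- The image of a generator `x ∈ X` in the free metabelian Lie algebra. -/
noncomputable def FreeMetabelianLieAlgebra.of (k : Type u) [Field k] {X : Type v} (x : X) :
    FreeMetabelianLieAlgebra k X :=
  LieSubmodule.Quotient.mk (N := LieAlgebra.derivedSeries k (FreeLieAlgebra k X) 2)
    (FreeLieAlgebra.of k x)

/-- A regular `R`-word on a linearly ordered set `X`: data `a₀, a₁, …, aₙ` with `n ≥ 1`
and `a₀ > a₁ ≤ a₂ ≤ ⋯ ≤ aₙ`. -/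
structure RWord (X : Type v) [LinearOrder X] where
  a₀ : X
  a₁ : X
  rest : List X
  lt : a₁ < a₀
  sorted : (a₁ :: rest).Pairwise (· ≤ ·)

/-- The image in the free metabelian Lie algebra of a regular `R`-word, i.e. the
left-normed bracket `[a₀, a₁, …, aₙ]` of the images of its letters. -/
noncomputable def RWord.toLie (k : Type u) [Field k] {X : Type v} [LinearOrder X]
    (w : RWord X) : FreeMetabelianLieAlgebra k X :=
  ((w.a₁ :: w.rest).map (FreeMetabelianLieAlgebra.of k)).foldl (fun u v => ⁅u, v⁆)
    (FreeMetabelianLieAlgebra.of k w.a₀)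

set_option linter.unusedSectionVars false

namespace MetabAux

variable {k : Type u} [Field k] {X : Type v} [LinearOrder X]

open FreeMetabelianLieAlgebra List

variable (k) in
/-- Left-normed product of `s` with a list of generators. -/
noncomputable def F (s : FreeMetabelianLieAlgebra k X) (l : List X) :
    FreeMetabelianLieAlgebra k X :=
  (l.map (FreeMetabelianLieAlgebra.of k)).foldl (fun a b => ⁅a, b⁆) s

lemma F_nil (s : FreeMetabelianLieAlgebra k X) : F k s ([] : List X) = s := rfl

lemma F_cons (s : FreeMetabelianLieAlgebra k X) (a : X) (l : List X) :
    F k s (a :: l) = F k ⁅s, of k a⁆ l := rfl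

lemma F_append (s : FreeMetabelianLieAlgebra k X) (l₁ l₂ : List X) :
    F k s (l₁ ++ l₂) = F k (F k s l₁) l₂ := by
  simp [F, List.foldl_append]

lemma F_add (s t : FreeMetabelianLieAlgebra k X) (l : List X) :
    F k (s + t) l = F k s l + F k t l := by
  induction l generalizing s t with
  | nil => rfl
  | cons a l ih => rw [F_cons, F_cons, F_cons, ← ih, add_lie]

lemma F_smul (c : k) (s : FreeMetabelianLieAlgebra k X) (l : List X) :
    F k (c • s) l = c • F k s l := by
  induction l generalizing s with
  | nil => rfl
  | cons a l ih => rw [F_cons, F_cons, ← ih, smul_lie]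

lemma F_zero (l : List X) : F k (0 : FreeMetabelianLieAlgebra k X) l = 0 := by
  induction l with
  | nil => rfl
  | cons a l ih => rw [F_cons, zero_lie]; exact ih

lemma F_neg (s : FreeMetabelianLieAlgebra k X) (l : List X) : F k (-s) l = -F k s l := by
  have := F_add (-s) s l
  rw [neg_add_cancel, F_zero] at this
  exact eq_neg_of_add_eq_zero_left this.symm

lemma F_sub (s t : FreeMetabelianLieAlgebra k X) (l : List X) :
    F k (s - t) l = F k s l - F k t l := by
  rw [sub_eq_add_neg, F_add, F_neg, sub_eq_add_neg]


/-- Metabelian identity in the quotient. -/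
lemma metab (a b c d : FreeMetabelianLieAlgebra k X) : ⁅⁅a, b⁆, ⁅c, d⁆⁆ = 0 := by
  obtain ⟨a, rfl⟩ := LieSubmodule.Quotient.surjective_mk' _ a
  obtain ⟨b, rfl⟩ := LieSubmodule.Quotient.surjective_mk' _ b
  obtain ⟨c, rfl⟩ := LieSubmodule.Quotient.surjective_mk' _ c
  obtain ⟨d, rfl⟩ := LieSubmodule.Quotient.surjective_mk' _ d
  have h1 : ∀ x y : FreeLieAlgebra k X,
      ⁅x, y⁆ ∈ LieAlgebra.derivedSeries k (FreeLieAlgebra k X) 1 := by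
    intro x y
    rw [LieAlgebra.derivedSeries_def, LieAlgebra.derivedSeriesOfIdeal_succ,
      LieAlgebra.derivedSeriesOfIdeal_zero]
    exact LieSubmodule.lie_mem_lie (LieSubmodule.mem_top x) (LieSubmodule.mem_top y)
  have h2 : ⁅⁅a, b⁆, ⁅c, d⁆⁆ ∈ LieAlgebra.derivedSeries k (FreeLieAlgebra k X) 2 := by
    rw [LieAlgebra.derivedSeries_def, LieAlgebra.derivedSeriesOfIdeal_succ]
    exact LieSubmodule.lie_mem_lie (h1 a b) (h1 c d)
  have : (LieSubmodule.Quotient.mk' (LieAlgebra.derivedSeries k (FreeLieAlgebra k X) 2))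
      ⁅⁅a, b⁆, ⁅c, d⁆⁆ = 0 := (LieSubmodule.Quotient.mk_eq_zero _).mpr h2
  rw [← this]
  rfl

/-- Bracket-shaped elements. -/
def IsB (x : FreeMetabelianLieAlgebra k X) : Prop := ∃ u v : FreeMetabelianLieAlgebra k X, x = ⁅u, v⁆

lemma metab' {x y : FreeMetabelianLieAlgebra k X} (hx : IsB x) (hy : IsB y) : ⁅x, y⁆ = 0 := by
  obtain ⟨u, v, rfl⟩ := hx; obtain ⟨p, q, rfl⟩ := hy; exact metab u v p q

lemma F_isB (p q : FreeMetabelianLieAlgebra k X) (l : List X) : IsB (F k ⁅p, q⁆ l) := by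
  induction l generalizing p q with
  | nil => exact ⟨p, q, rfl⟩
  | cons a l ih => rw [F_cons]; exact ih _ _

lemma jac3 (A B C : FreeMetabelianLieAlgebra k X) :
    ⁅⁅A, B⁆, C⁆ = ⁅⁅A, C⁆, B⁆ - ⁅⁅B, C⁆, A⁆ := by
  rw [lie_lie, ← lie_skew (x := A) (y := ⁅B, C⁆), ← lie_skew (x := B) (y := ⁅A, C⁆)]
  abel

lemma swap_tail (p q a b : FreeMetabelianLieAlgebra k X) :
    ⁅⁅⁅p, q⁆, a⁆, b⁆ = ⁅⁅⁅p, q⁆, b⁆, a⁆ := by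
  rw [lie_lie, metab, zero_sub, ← lie_skew, neg_neg]

lemma F_perm {l₁ l₂ : List X} (h : l₁.Perm l₂) (p q : FreeMetabelianLieAlgebra k X) :
    F k ⁅p, q⁆ l₁ = F k ⁅p, q⁆ l₂ := by
  induction h generalizing p q with
  | nil => rfl
  | cons x _ ih => rw [F_cons, F_cons]; exact ih _ _
  | swap x y l => rw [F_cons, F_cons, F_cons, F_cons, swap_tail]
  | trans _ _ ih₁ ih₂ => rw [ih₁, ih₂]

lemma RWord.toLie_eq (w : RWord X) :
    w.toLie k = F k ⁅of k w.a₀, of k w.a₁⁆ w.rest := rfl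


variable (k X) in
/-- Span of images of regular R-words. -/
noncomputable def M : Submodule k (FreeMetabelianLieAlgebra k X) :=
  Submodule.span k {x | ∃ w : RWord X, x = w.toLie k}

lemma metab_M {u : FreeMetabelianLieAlgebra k X} (hu : u ∈ M k X)
    (c d : FreeMetabelianLieAlgebra k X) : ⁅u, ⁅c, d⁆⁆ = 0 := by
  induction hu using Submodule.span_induction with
  | mem x hx =>
    obtain ⟨w, rfl⟩ := hx
    obtain ⟨p, q, he⟩ := F_isB (of k w.a₀) (of k w.a₁) w.rest
    rw [RWord.toLie_eq, he, metab]
  | zero => rw [zero_lie]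
  | add x y _ _ hx hy => rw [add_lie, hx, hy, add_zero]
  | smul a x _ hx => rw [smul_lie, hx, smul_zero]

lemma rword_mul (w : RWord X) (b : X) : ⁅w.toLie k, of k b⁆ ∈ M k X := by
  have hmem : ∀ x ∈ w.rest, w.a₁ ≤ x := (List.pairwise_cons.mp w.sorted).1
  have hrest : w.rest.Pairwise (· ≤ ·) := (List.pairwise_cons.mp w.sorted).2
  have h0 : ⁅w.toLie k, of k b⁆ = F k ⁅of k w.a₀, of k w.a₁⁆ (w.rest ++ [b]) := by
    rw [F_append, RWord.toLie_eq]; rfl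
  rcases le_or_gt w.a₁ b with hb | hb
  · -- insert b into rest
    refine Submodule.subset_span
      ⟨⟨w.a₀, w.a₁, List.orderedInsert (· ≤ ·) b w.rest, w.lt, ?_⟩, ?_⟩
    · refine List.pairwise_cons.mpr ⟨?_, hrest.orderedInsert b w.rest⟩
      intro x hx
      rcases (List.mem_orderedInsert _).mp hx with rfl | hx
      · exact hb
      · exact hmem x hx
    · rw [h0, RWord.toLie_eq]
      exact F_perm ((List.perm_append_singleton b w.rest).trans
        (List.perm_orderedInsert _ b w.rest).symm) _ _
  · -- b < a₁ < a₀ : Jacobi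
    have hba₀ : b < w.a₀ := hb.trans w.lt
    have h1 : ⁅w.toLie k, of k b⁆ = F k ⁅⁅of k w.a₀, of k w.a₁⁆, of k b⁆ w.rest := by
      rw [h0, F_perm (List.perm_append_singleton b w.rest) _ _, F_cons]
    rw [h1, jac3, F_sub]
    refine sub_mem ?_ ?_
    · refine Submodule.subset_span ⟨⟨w.a₀, b, w.a₁ :: w.rest, hba₀, List.pairwise_cons.mpr
        ⟨?_, w.sorted⟩⟩, ?_⟩
      · intro x hx
        rcases List.mem_cons.mp hx with rfl | hx
        · exact hb.le
        · exact hb.le.trans (hmem x hx)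
      · rw [RWord.toLie_eq]
        exact (F_cons _ _ _).symm
    · refine Submodule.subset_span ⟨⟨w.a₁, b, List.insertionSort (· ≤ ·) (w.a₀ :: w.rest), hb,
        List.pairwise_cons.mpr ⟨?_, List.pairwise_insertionSort _ _⟩⟩, ?_⟩
      · intro x hx
        have hx' : x ∈ w.a₀ :: w.rest := (List.perm_insertionSort _ _).mem_iff.mp hx
        rcases List.mem_cons.mp hx' with rfl | hx'
        · exact hba₀.le
        · exact hb.le.trans (hmem x hx')
      · rw [RWord.toLie_eq]
        rw [show F k ⁅⁅of k w.a₁, of k b⁆, of k w.a₀⁆ w.rest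
            = F k ⁅of k w.a₁, of k b⁆ (w.a₀ :: w.rest) from (F_cons _ _ _).symm]
        exact F_perm (List.perm_insertionSort _ _).symm _ _

lemma M_mul {u : FreeMetabelianLieAlgebra k X} (hu : u ∈ M k X) (b : X) :
    ⁅u, of k b⁆ ∈ M k X := by
  induction hu using Submodule.span_induction with
  | mem x hx => obtain ⟨w, rfl⟩ := hx; exact rword_mul w b
  | zero => rw [zero_lie]; exact zero_mem _
  | add x y _ _ hx hy => rw [add_lie]; exact add_mem hx hy
  | smul a x _ hx => rw [smul_lie]; exact Submodule.smul_mem _ _ hx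

lemma pair_mem_M (a b : X) : ⁅of k a, of k b⁆ ∈ M k X := by
  rcases lt_trichotomy a b with h | rfl | h
  · have : ⁅of k a, of k b⁆ = -(RWord.toLie k ⟨b, a, [], h, List.pairwise_singleton _ a⟩) := by
      rw [RWord.toLie_eq, F_nil, ← lie_skew]
    rw [this]
    exact neg_mem (Submodule.subset_span ⟨_, rfl⟩)
  · rw [lie_self]; exact zero_mem _
  · exact Submodule.subset_span ⟨⟨a, b, [], h, List.pairwise_singleton _ b⟩, rfl⟩


variable (k X) in
/-- Generating set: generators and R-word images. -/
noncomputable def N : Submodule k (FreeMetabelianLieAlgebra k X) :=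
  Submodule.span k
    (Set.range (of k : X → FreeMetabelianLieAlgebra k X) ∪ {x | ∃ w : RWord X, x = w.toLie k})

lemma toLie_isB (w : RWord X) : IsB (w.toLie k) := by
  rw [RWord.toLie_eq]; exact F_isB _ _ _

lemma M_le_N : M k X ≤ N k X := Submodule.span_mono fun z hz => Or.inr hz

lemma N_lie : ∀ x ∈ N k X, ∀ y ∈ N k X, ⁅x, y⁆ ∈ N k X := by
  have gen : ∀ u ∈ (Set.range (of k : X → FreeMetabelianLieAlgebra k X) ∪
      {x | ∃ w : RWord X, x = w.toLie k}),
      ∀ v ∈ (Set.range (of k : X → FreeMetabelianLieAlgebra k X) ∪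
      {x | ∃ w : RWord X, x = w.toLie k}), ⁅u, v⁆ ∈ N k X := by
    rintro u (⟨a, rfl⟩ | ⟨w, rfl⟩) v (⟨b, rfl⟩ | ⟨w', rfl⟩)
    · exact M_le_N (pair_mem_M a b)
    · rw [← lie_skew]
      exact neg_mem (M_le_N (rword_mul w' a))
    · exact M_le_N (rword_mul w b)
    · rw [metab' (toLie_isB w) (toLie_isB w')]
      exact zero_mem _
  intro x hx
  induction hx using Submodule.span_induction with
  | mem u hu =>
    intro y hy
    induction hy using Submodule.span_induction with
    | mem v hv => exact gen u hu v hv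
    | zero => rw [lie_zero]; exact zero_mem _
    | add a b _ _ ha hb => rw [lie_add]; exact add_mem ha hb
    | smul c a _ ha => rw [lie_smul]; exact Submodule.smul_mem _ _ ha
  | zero => intro y _; rw [zero_lie]; exact zero_mem _
  | add a b _ _ ha hb => intro y hy; rw [add_lie]; exact add_mem (ha y hy) (hb y hy)
  | smul c a _ ha => intro y hy; rw [smul_lie]; exact Submodule.smul_mem _ _ (ha y hy)

variable (k X) in
/-- `N` as a Lie subalgebra. -/
noncomputable def K : LieSubalgebra k (FreeMetabelianLieAlgebra k X) :=
  { N k X with lie_mem' := fun {x y} hx hy => N_lie x hx y hy }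

lemma mem_N (x : FreeMetabelianLieAlgebra k X) : x ∈ N k X := by
  let π : FreeLieAlgebra k X →ₗ⁅k⁆ FreeMetabelianLieAlgebra k X :=
    { (LieAlgebra.derivedSeries k (FreeLieAlgebra k X) 2).toSubmodule.mkQ with
      map_lie' := fun {x y} => rfl }
  let f : X → K k X := fun x => ⟨of k x, Submodule.subset_span (Or.inl ⟨x, rfl⟩)⟩
  let F₁ := FreeLieAlgebra.lift k f
  have key : π = (K k X).incl.comp F₁ := by
    apply FreeLieAlgebra.hom_ext
    intro x
    show π (FreeLieAlgebra.of k x) = (K k X).incl (F₁ (FreeLieAlgebra.of k x))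
    rw [show F₁ (FreeLieAlgebra.of k x) = f x from FreeLieAlgebra.lift_of_apply f x]
    rfl
  obtain ⟨y, hy⟩ := Submodule.mkQ_surjective
    (LieAlgebra.derivedSeries k (FreeLieAlgebra k X) 2).toSubmodule x
  have : x = (K k X).incl (F₁ y) := by
    rw [← hy]
    exact LieHom.congr_fun key y
  rw [this]
  exact (F₁ y).2


variable (k) in
/-- The target span. -/
noncomputable def P (S : Set (FreeMetabelianLieAlgebra k X)) :
    Submodule k (FreeMetabelianLieAlgebra k X) :=
  Submodule.span k
    ({x | ∃ s ∈ S, ∃ l : List X, l.Pairwise (· ≤ ·) ∧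
        x = (l.map (FreeMetabelianLieAlgebra.of k)).foldl (fun a b => ⁅a, b⁆) s} ∪
      {x | ∃ s ∈ S, ∃ w : RWord X, x = ⁅w.toLie k, s⁆})

variable {S : Set (FreeMetabelianLieAlgebra k X)}

lemma bracket_w_s_mem {u s : FreeMetabelianLieAlgebra k X} (hu : u ∈ M k X) (hs : s ∈ S) :
    ⁅u, s⁆ ∈ P k S := by
  induction hu using Submodule.span_induction with
  | mem x hx => obtain ⟨w, rfl⟩ := hx; exact Submodule.subset_span (Or.inr ⟨s, hs, w, rfl⟩)
  | zero => rw [zero_lie]; exact zero_mem _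
  | add x y _ _ hx hy => rw [add_lie]; exact add_mem hx hy
  | smul a x _ hx => rw [smul_lie]; exact Submodule.smul_mem _ _ hx

lemma key8 : ∀ (l : List X) (u : FreeMetabelianLieAlgebra k X), u ∈ M k X →
    ∀ s ∈ S, F k ⁅u, s⁆ l ∈ P k S := by
  intro l
  induction l with
  | nil => intro u hu s hs; exact bracket_w_s_mem hu hs
  | cons e l ih =>
    intro u hu s hs
    rw [F_cons]
    have h : ⁅⁅u, s⁆, of k e⁆ = ⁅⁅u, of k e⁆, s⁆ := by
      rw [jac3, show ⁅⁅s, of k e⁆, u⁆ = 0 from by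
        rw [← lie_skew, metab_M hu s (of k e), neg_zero], sub_zero]
    rw [h]
    exact ih ⁅u, of k e⁆ (M_mul hu e) s hs

lemma key9 {s : FreeMetabelianLieAlgebra k X} (hs : s ∈ S) (l : List X)
    (hl : l.Pairwise (· ≤ ·)) (b : X) : ⁅F k s l, of k b⁆ ∈ P k S := by
  have h : ⁅F k s l, of k b⁆ = F k s (l ++ [b]) := by rw [F_append]; rfl
  rw [h]
  cases l with
  | nil => exact Submodule.subset_span (Or.inl ⟨s, hs, [b], List.pairwise_singleton _ b, rfl⟩)
  | cons c l₀ =>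
    have hc : ∀ x ∈ l₀, c ≤ x := (List.pairwise_cons.mp hl).1
    have hl₀ : l₀.Pairwise (· ≤ ·) := (List.pairwise_cons.mp hl).2
    rcases le_or_gt c b with hb | hb
    · have h2 : F k s ((c :: l₀) ++ [b]) = F k s (c :: List.orderedInsert (· ≤ ·) b l₀) := by
        rw [show (c :: l₀) ++ [b] = c :: (l₀ ++ [b]) from rfl, F_cons, F_cons]
        exact F_perm ((List.perm_append_singleton b l₀).trans
          (List.perm_orderedInsert _ b l₀).symm) _ _
      rw [h2]
      refine Submodule.subset_span (Or.inl ⟨s, hs, c :: List.orderedInsert (· ≤ ·) b l₀, ?_, rfl⟩)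
      refine List.pairwise_cons.mpr ⟨?_, hl₀.orderedInsert b l₀⟩
      intro x hx
      rcases (List.mem_orderedInsert _).mp hx with rfl | hx
      · exact hb
      · exact hc x hx
    · have h1 : F k s ((c :: l₀) ++ [b]) = F k ⁅⁅s, of k c⁆, of k b⁆ l₀ := by
        rw [show (c :: l₀) ++ [b] = c :: (l₀ ++ [b]) from rfl, F_cons,
          F_perm (List.perm_append_singleton b l₀) _ _, F_cons]
      rw [h1, jac3, F_sub]
      refine sub_mem ?_ ?_
      · rw [show F k ⁅⁅s, of k b⁆, of k c⁆ l₀ = F k s (b :: c :: l₀) from rfl]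
        refine Submodule.subset_span (Or.inl ⟨s, hs, b :: c :: l₀, ?_, rfl⟩)
        refine List.pairwise_cons.mpr ⟨?_, hl⟩
        intro x hx
        rcases List.mem_cons.mp hx with rfl | hx
        · exact hb.le
        · exact hb.le.trans (hc x hx)
      · exact key8 l₀ ⁅of k c, of k b⁆ (pair_mem_M c b) s hs

lemma lie_mem_P : ∀ t ∈ P k S, ∀ x : FreeMetabelianLieAlgebra k X, ⁅x, t⁆ ∈ P k S := by
  intro t ht
  induction ht using Submodule.span_induction with
  | mem t ht =>
    intro x
    have hx := mem_N x
    induction hx using Submodule.span_induction with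
    | mem u hu =>
      rcases ht with ⟨s, hs, l, hl, rfl⟩ | ⟨s, hs, w, rfl⟩
      · rcases hu with ⟨a, rfl⟩ | ⟨w', rfl⟩
        · rw [← lie_skew]
          exact neg_mem (key9 hs l hl a)
        · cases l with
          | nil => exact Submodule.subset_span (Or.inr ⟨s, hs, w', rfl⟩)
          | cons c l₀ =>
            rw [show ((c :: l₀).map (FreeMetabelianLieAlgebra.of k)).foldl
                (fun a b => ⁅a, b⁆) s = F k ⁅s, of k c⁆ l₀ from rfl,
              metab' (toLie_isB w') (F_isB s (of k c) l₀)]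
            exact zero_mem _
      · rcases hu with ⟨a, rfl⟩ | ⟨w', rfl⟩
        · rw [← lie_skew]
          have h2 : ⁅⁅w.toLie k, s⁆, of k a⁆ = ⁅⁅w.toLie k, of k a⁆, s⁆ := by
            rw [jac3, show ⁅⁅s, of k a⁆, w.toLie k⁆ = 0 from by
              rw [← lie_skew, metab' (toLie_isB w) ⟨s, of k a, rfl⟩, neg_zero], sub_zero]
          rw [h2]
          exact neg_mem (bracket_w_s_mem (rword_mul w a) hs)
        · rw [leibniz_lie, metab' (toLie_isB w') (toLie_isB w), zero_lie,
            metab' (toLie_isB w) ⟨w'.toLie k, s, rfl⟩, zero_add]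
          exact zero_mem _
    | zero => rw [zero_lie]; exact zero_mem _
    | add a b _ _ ha hb => rw [add_lie]; exact add_mem ha hb
    | smul c a _ ha => rw [smul_lie]; exact Submodule.smul_mem _ _ ha
  | zero => intro x; rw [lie_zero]; exact zero_mem _
  | add a b _ _ ha hb => intro x; rw [lie_add]; exact add_mem (ha x) (hb x)
  | smul c a _ ha => intro x; rw [lie_smul]; exact Submodule.smul_mem _ _ (ha x)

end MetabAux

/-- Every element of the Lie ideal of `L₍₂₎(X)` generated by `S` is a `k`-linear combination
of elements of the two forms: (i) `[s, a₁, …, aₙ]` with `s ∈ S` and `a₁ ≤ ⋯ ≤ aₙ` a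
nondecreasing list of generators (`n ≥ 0`), and (ii) `⁅u, s⁆` with `s ∈ S` and `u` the
image of a regular `R`-word. -/
theorem lieIdeal_le_span_normal_words (k : Type u) [Field k] (X : Type v) [LinearOrder X]
    (S : Set (FreeMetabelianLieAlgebra k X)) :
    (LieSubmodule.lieSpan k (FreeMetabelianLieAlgebra k X) S).toSubmodule ≤
      Submodule.span k
        ({x | ∃ s ∈ S, ∃ l : List X, l.Pairwise (· ≤ ·) ∧
            x = (l.map (FreeMetabelianLieAlgebra.of k)).foldl (fun a b => ⁅a, b⁆) s} ∪
          {x | ∃ s ∈ S, ∃ w : RWord X, x = ⁅w.toLie k, s⁆}) := by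
  let I : LieIdeal k (FreeMetabelianLieAlgebra k X) :=
    { MetabAux.P k S with
      lie_mem := fun {x m} hm => MetabAux.lie_mem_P m hm x }
  have hle : LieSubmodule.lieSpan k (FreeMetabelianLieAlgebra k X) S ≤ I :=
    LieSubmodule.lieSpan_le.mpr fun s hs =>
      Submodule.subset_span (Or.inl ⟨s, hs, [], List.Pairwise.nil, rfl⟩)
  exact fun x hx => hle hx
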